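/- arXiv:1810.11304 — 6 statements merged into one kernel-verified Lean document; each statement's English description precedes it below -/
import Mathlib

section
/- Let p be a prime, K = F_p((t)), and U_1 = 1 + tF_p[[t]] the group of principal units. For j ≥ 1 set E_j = 1 + t^j ∈ U_1. Then the family {E_j : j ≥ 1, p ∤ j} is a topological ℤ_p-basis of U_1; in particular, every element of U_1 can be written uniquely as a convergent product ∏_{p∤j} E_j^{n_j} with n_j ∈ ℤ_p. -/
open PowerSeries

open PowerSeries Finset

variable {p : ℕ} [hp : Fact p.Prime]

local notation "R" => PowerSeries (ZMod p)

instance : CharP (PowerSeries (ZMod p)) p :=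
  charP_of_injective_ringHom (PowerSeries.C_injective) p

lemma lemA (j k : ℕ) : ((1 + X ^ j : R)) ^ p ^ k = 1 + X ^ (j * p ^ k) := by
  rw [add_pow_char_pow, one_pow, ← pow_mul]

lemma dvd_sub_mul {d : ℕ} {a a' b b' : R} (h1 : X ^ d ∣ a - a') (h2 : X ^ d ∣ b - b') :
    X ^ d ∣ a * b - a' * b' := by
  have : a * b - a' * b' = (a - a') * b + a' * (b - b') := by ring
  rw [this]
  exact dvd_add (h1.mul_right _) (h2.mul_left _)

lemma dvd_prod_sub_one {d : ℕ} {ι : Type*} {s : Finset ι} {f : ι → R}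
    (h : ∀ x ∈ s, X ^ d ∣ f x - 1) : X ^ d ∣ (∏ x ∈ s, f x) - 1 := by
  classical
  induction s using Finset.induction with
  | empty => simp
  | insert _ _ hx ih =>
    rename_i a s
    rw [Finset.prod_insert hx]
    have := dvd_sub_mul (h a (Finset.mem_insert_self a s))
      (ih fun x hxs => h x (Finset.mem_insert_of_mem hxs))
    simpa using this

lemma hone {d m c : ℕ} (h : d ≤ m) : (X : R) ^ d ∣ (1 + X ^ m) ^ c - 1 := by
  have h1 : (X : R) ^ m ∣ (1 + X ^ m) ^ c - 1 ^ c := by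
    have := sub_dvd_pow_sub_pow (1 + X ^ m : R) 1 c
    simpa using this
  simpa using (pow_dvd_pow (X : R) h).trans h1

lemma bin {m : ℕ} (hm : 1 ≤ m) (c : ℕ) :
    (X : R) ^ (m + 1) ∣ (1 + X ^ m) ^ c - (1 + (c : R) * X ^ m) := by
  induction c with
  | zero => simp
  | succ c ih =>
    have key : (1 + X ^ m : R) ^ (c+1) - (1 + ((c:R)+1) * X ^ m)
        = ((1 + X ^ m) ^ c - (1 + (c : R) * X ^ m)) * (1 + X ^ m)
          + ((c : R) + 1) * (X ^ m * X ^ m) - X ^ m * X ^ m := by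
      ring
    rw [Nat.cast_add, Nat.cast_one, key]
    have hxx : (X : R) ^ (m+1) ∣ X ^ m * X ^ m := by
      rw [← pow_add]; exact pow_dvd_pow _ (by omega)
    exact dvd_sub (dvd_add (ih.mul_right _) (hxx.mul_left _)) hxx


/-- `i`-th digit of `a` in base `p`. -/
def dig (p a i : ℕ) : ℕ := a / p ^ i % p

lemma dig_lt {p : ℕ} (hp : 0 < p) (a i : ℕ) : dig p a i < p := Nat.mod_lt _ hp

lemma dig_zero (p a : ℕ) : dig p a 0 = a % p := by simp [dig]

lemma dig_succ (p a i : ℕ) : dig p a (i + 1) = dig p (a / p) i := by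
  simp [dig, pow_succ, Nat.div_div_eq_div_mul, mul_comm]

lemma mod_mul_base (p a K : ℕ) (hp : 0 < p) :
    a % (p * p ^ K) = a % p + p * (a / p % p ^ K) := by
  have h1 : a / p % p ^ K = a % (p * p ^ K) / p := (Nat.mod_mul_right_div_self a p (p ^ K)).symm
  have h2 : a % (p * p ^ K) % p = a % p := Nat.mod_mod_of_dvd a ⟨p ^ K, rfl⟩
  conv_lhs => rw [← Nat.div_add_mod (a % (p * p ^ K)) p]
  rw [h2, ← h1]
  exact Nat.add_comm _ _

lemma dig_mod (p : ℕ) (hp : 0 < p) (K : ℕ) :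
    ∀ a, ∑ i ∈ range K, dig p a i * p ^ i = a % p ^ K := by
  induction K with
  | zero => simp [Nat.mod_one]
  | succ K ih =>
    intro a
    rw [Finset.sum_range_succ' (fun i => dig p a i * p ^ i)]
    simp only [dig_succ, dig_zero, pow_zero, mul_one]
    have h : ∀ x ∈ range K, dig p (a / p) x * p ^ (x + 1) = p * (dig p (a / p) x * p ^ x) :=
      fun x _ => by ring
    rw [Finset.sum_congr rfl h, ← Finset.mul_sum, ih, pow_succ, mul_comm (p ^ K) p,
      mod_mul_base p a K hp]
    exact Nat.add_comm _ _

lemma sum_dig {p : ℕ} (hp : 0 < p) {a N : ℕ} (h : a < p ^ N) :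
    ∑ i ∈ range N, dig p a i * p ^ i = a := by
  rw [dig_mod p hp, Nat.mod_eq_of_lt h]

lemma dig_sum {p : ℕ} (hp : 1 < p) :
    ∀ (N : ℕ) (e : ℕ → ℕ), (∀ i, e i < p) → ∀ i < N,
      dig p (∑ i' ∈ range N, e i' * p ^ i') i = e i := by
  intro N
  induction N with
  | zero => intro e he i hi; omega
  | succ N ih =>
    intro e he i hi
    have hS : ∑ i' ∈ range (N + 1), e i' * p ^ i'
        = p * (∑ i' ∈ range N, e (i' + 1) * p ^ i') + e 0 := by
      rw [Finset.sum_range_succ' (fun i => e i * p ^ i) N, pow_zero, mul_one, Finset.mul_sum]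
      congr 1
      exact Finset.sum_congr rfl fun x _ => by ring
    cases i with
    | zero =>
      rw [dig_zero, hS, Nat.mul_add_mod, Nat.mod_eq_of_lt (he 0)]
    | succ i =>
      rw [dig_succ, hS]
      have hdiv : (p * (∑ i' ∈ range N, e (i' + 1) * p ^ i') + e 0) / p
          = ∑ i' ∈ range N, e (i' + 1) * p ^ i' := by
        rw [Nat.mul_add_div (by omega), Nat.div_eq_of_lt (he 0), add_zero]
      rw [hdiv]
      exact ih (fun i => e (i + 1)) (fun i => he _) i (by omega)

lemma sum_digits_lt {p : ℕ} (hp : 1 < p) (e : ℕ → ℕ) (he : ∀ i, e i < p) (N : ℕ) :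
    ∑ i ∈ range N, e i * p ^ i < p ^ N := by
  induction N with
  | zero => simp
  | succ N ih =>
    rw [Finset.sum_range_succ]
    have h1 : e N * p ^ N ≤ (p - 1) * p ^ N := Nat.mul_le_mul (by have := he N; omega) le_rfl
    have hps : p - 1 + 1 = p := by omega
    have h2 : p ^ N + (p - 1) * p ^ N = p ^ (N + 1) :=
      calc p ^ N + (p - 1) * p ^ N = (p - 1 + 1) * p ^ N := by ring
        _ = p * p ^ N := by rw [hps]
        _ = p ^ (N + 1) := by rw [pow_succ, mul_comm]
    omega


variable [hp : Fact p.Prime]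

lemma nat_sub_dvd_padic {a b N : ℕ} (h : (p : ℤ_[p]) ^ N ∣ (a : ℤ_[p]) - b) :
    a ≡ b [MOD p ^ N] := by
  have h' : (p : ℤ_[p]) ^ N ∣ (((a : ℤ) - b : ℤ) : ℤ_[p]) := by push_cast; exact h
  rw [PadicInt.pow_p_dvd_int_iff] at h'
  have h'' : (p ^ N : ℤ) ∣ (b : ℤ) - a := by rw [← neg_sub]; exact dvd_neg.mpr h'
  have : (a : ℤ) ≡ b [ZMOD (p ^ N : ℤ)] := Int.modEq_iff_dvd.mpr h''
  unfold Int.ModEq at this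
  unfold Nat.ModEq
  exact_mod_cast this

lemma padic_dvd_of_natCast {a b N : ℕ} (h : a ≡ b [MOD p ^ N]) :
    (p : ℤ_[p]) ^ N ∣ (a : ℤ_[p]) - b := by
  have := (Nat.modEq_iff_dvd).mp h
  obtain ⟨k, hk⟩ := this
  have : ((b : ℤ_[p]) - a) = (p : ℤ_[p]) ^ N * (k : ℤ_[p]) := by
    have := congrArg (fun z : ℤ => (z : ℤ_[p])) hk
    push_cast at this
    simpa using this
  exact ⟨-k, by rw [← neg_sub, this]; ring⟩

lemma appr_unique (x : ℤ_[p]) (N s : ℕ) (hs : s < p ^ N)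
    (hdvd : (p : ℤ_[p]) ^ N ∣ x - s) : x.appr N = s := by
  have h1 : (p : ℤ_[p]) ^ N ∣ x - x.appr N :=
    Ideal.mem_span_singleton.mp (PadicInt.appr_spec N x)
  have h2 : (p : ℤ_[p]) ^ N ∣ (x.appr N : ℤ_[p]) - s := by
    have := dvd_sub hdvd h1
    simpa using this
  have := nat_sub_dvd_padic h2
  have hlt := PadicInt.appr_lt x N
  rwa [Nat.ModEq, Nat.mod_eq_of_lt hlt, Nat.mod_eq_of_lt hs] at this

lemma padic_eq_zero_of_forall_dvd {x : ℤ_[p]} (h : ∀ K : ℕ, (p : ℤ_[p]) ^ K ∣ x) : x = 0 := by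
  by_contra hx
  have hnorm : 0 < ‖x‖ := norm_pos_iff.mpr hx
  have hinv : (p : ℝ)⁻¹ < 1 := by
    rw [inv_lt_one_iff₀]
    right
    exact_mod_cast hp.out.one_lt
  obtain ⟨K, hK⟩ := exists_pow_lt_of_lt_one hnorm hinv
  have : ‖x‖ ≤ (p : ℝ) ^ (-K : ℤ) := by
    rw [PadicInt.norm_le_pow_iff_mem_span_pow, Ideal.mem_span_singleton]
    exact h K
  rw [zpow_neg, zpow_natCast, ← inv_pow] at this
  linarith

lemma summable_digit_series (c : ℕ → ℕ) :
    Summable (fun i => (c i : ℤ_[p]) * (p : ℤ_[p]) ^ i) := by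
  apply Summable.of_norm_bounded (g := fun i => ((p : ℝ)⁻¹) ^ i)
  · apply summable_geometric_of_lt_one (by positivity)
    rw [inv_lt_one_iff₀]; right; exact_mod_cast hp.out.one_lt
  · intro i
    calc ‖(c i : ℤ_[p]) * (p : ℤ_[p]) ^ i‖ ≤ ‖(c i : ℤ_[p])‖ * ‖(p : ℤ_[p]) ^ i‖ := norm_mul_le _ _
      _ ≤ 1 * ‖(p : ℤ_[p]) ^ i‖ := by
          apply mul_le_mul_of_nonneg_right (PadicInt.norm_le_one _) (norm_nonneg _)
      _ = ((p : ℝ)⁻¹) ^ i := by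
          rw [one_mul, PadicInt.norm_p_pow, zpow_neg, zpow_natCast, inv_pow]


section Greedy

variable (p : ℕ) [hp : Fact p.Prime]

/-- Greedy digit: `gc p u m` is the coefficient needed at step `m`. -/
noncomputable def gc (u : PowerSeries (ZMod p)) : ℕ → ℕ
  | m => (PowerSeries.coeff m
      (u - ∏ k ∈ (Finset.Icc 1 (m - 1)).attach,
        (1 + PowerSeries.X ^ (k : ℕ)) ^ (gc u k))).val
  decreasing_by
    have := k.2
    simp only [Finset.mem_Icc] at this
    omega

lemma gc_lt (u : PowerSeries (ZMod p)) (m : ℕ) : gc p u m < p := by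
  rw [gc]
  exact ZMod.val_lt _

lemma gc_spec (u : PowerSeries (ZMod p)) (m : ℕ) :
    gc p u m = (PowerSeries.coeff m
      (u - ∏ k ∈ Finset.Icc 1 (m - 1), (1 + PowerSeries.X ^ k) ^ (gc p u k))).val := by
  rw [gc, ← Finset.prod_attach (Finset.Icc 1 (m - 1))
    (fun k => (1 + PowerSeries.X ^ k) ^ (gc p u k))]

lemma constantCoeff_prod_one (s : Finset ℕ) (e : ℕ → ℕ) (h : ∀ k ∈ s, 1 ≤ k) :
    constantCoeff (∏ k ∈ s, (1 + X ^ k : PowerSeries (ZMod p)) ^ (e k)) = 1 := by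
  rw [map_prod]
  apply Finset.prod_eq_one
  intro k hk
  rw [map_pow, map_add, map_one, map_pow, constantCoeff_X, zero_pow (by have := h k hk; omega),
    add_zero, one_pow]

lemma gc_inv (u : PowerSeries (ZMod p)) (hu : constantCoeff u = 1) (M : ℕ) :
    (X : PowerSeries (ZMod p)) ^ (M + 1) ∣
      u - ∏ k ∈ Finset.Icc 1 M, (1 + X ^ k) ^ (gc p u k) := by
  induction M with
  | zero =>
    rw [show Finset.Icc 1 0 = (∅ : Finset ℕ) by simp, Finset.prod_empty, pow_one, X_dvd_iff,
      map_sub, hu, map_one, sub_self]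
  | succ M ih =>
    set P : PowerSeries (ZMod p) := ∏ k ∈ Finset.Icc 1 M, (1 + X ^ k) ^ (gc p u k) with hP
    set a : ZMod p := coeff (M + 1) (u - P) with ha
    have hgc : gc p u (M + 1) = a.val := by
      rw [gc_spec]; simp only [Nat.add_sub_cancel]; rfl
    have hprod : ∏ k ∈ Finset.Icc 1 (M + 1), (1 + X ^ k) ^ (gc p u k)
        = P * (1 + X ^ (M + 1)) ^ a.val := by
      rw [Finset.prod_Icc_succ_top (by omega : 1 ≤ M + 1), hgc]
    rw [hprod]
    have hcast : ((a.val : ℕ) : PowerSeries (ZMod p)) = C a := by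
      rw [← map_natCast (C) a.val, ZMod.natCast_val, ZMod.cast_id]
    have h1 : (X : PowerSeries (ZMod p)) ^ (M + 2) ∣
        (1 + X ^ (M + 1)) ^ a.val - (1 + C a * X ^ (M + 1)) := by
      have := bin (p := p) (by omega : 1 ≤ M + 1) a.val
      rw [hcast] at this
      exact this
    have hPc : constantCoeff P = 1 := by
      rw [hP]
      exact constantCoeff_prod_one p _ _ (fun k hk => (Finset.mem_Icc.mp hk).1)
    have h2 : (X : PowerSeries (ZMod p)) ^ (M + 2) ∣
        P * (1 + C a * X ^ (M + 1)) - (P + C a * X ^ (M + 1)) := by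
      have key : P * (1 + C a * X ^ (M + 1)) - (P + C a * X ^ (M + 1))
          = C a * ((P - 1) * X ^ (M + 1)) := by ring
      rw [key]
      apply Dvd.dvd.mul_left
      have hX : (X : PowerSeries (ZMod p)) ∣ P - 1 := by
        rw [X_dvd_iff, map_sub, hPc, map_one, sub_self]
      have : (X : PowerSeries (ZMod p)) ^ (M + 2) = X ^ (M + 1) * X := by ring
      rw [this]
      rw [mul_comm (P - 1)]
      exact mul_dvd_mul dvd_rfl hX
    have h3 : (X : PowerSeries (ZMod p)) ^ (M + 2) ∣
        (u - P) - C a * X ^ (M + 1) := by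
      rw [X_pow_dvd_iff]
      intro k hk
      rw [map_sub, coeff_C_mul, coeff_X_pow]
      rcases Nat.lt_or_ge k (M + 1) with h | h
      · have hcoeff : coeff k (u - P) = 0 := by
          have := (X_pow_dvd_iff.mp ih) k h
          exact this
        rw [hcoeff, if_neg (by omega), mul_zero, sub_zero]
      · have hk1 : k = M + 1 := by omega
        subst hk1
        rw [if_pos rfl, mul_one, ← ha, sub_self]
    have key : u - P * (1 + X ^ (M + 1)) ^ a.val
        = ((u - P) - C a * X ^ (M + 1))
          - P * ((1 + X ^ (M + 1)) ^ a.val - (1 + C a * X ^ (M + 1)))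
          - (P * (1 + C a * X ^ (M + 1)) - (P + C a * X ^ (M + 1))) := by
      ring
    rw [key]
    exact dvd_sub (dvd_sub h3 (h1.mul_left P)) h2

end Greedy

section Expand

variable {p : ℕ} [hp : Fact p.Prime]

lemma fact_pos : 0 < p := hp.out.pos

lemma expand (N : ℕ) (a : ℕ → ℕ) (ha : ∀ j, a j < p ^ N) :
    (X : PowerSeries (ZMod p)) ^ (N + 1) ∣
      (∏ j ∈ (Finset.range (N + 1)).filter (fun j => ¬ p ∣ j), (1 + X ^ j) ^ (a j))
      - ∏ m ∈ Finset.Icc 1 N,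
          (1 + X ^ m) ^ (dig p (a (ordCompl[p] m)) (m.factorization p)) := by
  classical
  set F := (Finset.range (N + 1)).filter (fun j => ¬ p ∣ j) with hF
  set δ : ℕ → ℕ := fun m => dig p (a (ordCompl[p] m)) (m.factorization p) with hδ
  set g : ℕ → PowerSeries (ZMod p) := fun m => (1 + X ^ m) ^ (δ m) with hg
  have hjF : ∀ j ∈ F, ¬ p ∣ j ∧ 1 ≤ j ∧ j ≤ N := by
    intro j hj
    rw [hF, Finset.mem_filter, Finset.mem_range] at hj
    refine ⟨hj.2, ?_, by omega⟩
    rcases Nat.eq_zero_or_pos j with h | h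
    · exact absurd (h ▸ dvd_zero p) hj.2
    · omega
  -- Step 1: expand each factor into digit factors
  have step1 : ∀ j ∈ F, (1 + X ^ j : PowerSeries (ZMod p)) ^ (a j)
      = ∏ i ∈ Finset.range N, (1 + X ^ (j * p ^ i)) ^ (dig p (a j) i) := by
    intro j _
    conv_lhs => rw [← sum_dig hp.out.pos (ha j)]
    rw [← Finset.prod_pow_eq_pow_sum]
    apply Finset.prod_congr rfl
    intro i _
    rw [mul_comm (dig p (a j) i), pow_mul, lemA]
  -- the injective reindexing map
  set e : ℕ × ℕ → ℕ := fun x => x.1 * p ^ x.2 with he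
  have hfact : ∀ x ∈ F ×ˢ Finset.range N, (e x).factorization p = x.2 ∧ ordCompl[p] (e x) = x.1 := by
    rintro ⟨j, i⟩ hx
    rw [Finset.mem_product] at hx
    obtain ⟨hndvd, hj1, _⟩ := hjF j hx.1
    have hj0 : j ≠ 0 := by omega
    have hfac : (j * p ^ i).factorization p = i := by
      rw [Nat.factorization_mul hj0 (pow_ne_zero i hp.out.pos.ne'),
        hp.out.factorization_pow]
      simp [Nat.factorization_eq_zero_of_not_dvd hndvd]
    constructor
    · exact hfac
    · rw [he]
      simp only
      rw [hfac, mul_comm, Nat.mul_div_cancel_left _ (pow_pos hp.out.pos i)]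
  have hinj : ∀ x ∈ F ×ˢ Finset.range N, ∀ y ∈ F ×ˢ Finset.range N, e x = e y → x = y := by
    intro x hx y hy hxy
    obtain ⟨hfx, hcx⟩ := hfact x hx
    obtain ⟨hfy, hcy⟩ := hfact y hy
    have h2 : x.2 = y.2 := by rw [← hfx, ← hfy, hxy]
    have h1 : x.1 = y.1 := by rw [← hcx, ← hcy, hxy]
    exact Prod.ext h1 h2
  set T := (F ×ˢ Finset.range N).image e with hT
  have hprodT : (∏ j ∈ F, (1 + X ^ j : PowerSeries (ZMod p)) ^ (a j)) = ∏ m ∈ T, g m := by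
    rw [Finset.prod_congr rfl step1, hT, Finset.prod_image hinj, ← Finset.prod_product']
    apply Finset.prod_congr rfl
    rintro ⟨j, i⟩ hx
    obtain ⟨hfx, hcx⟩ := hfact _ hx
    rw [hg, hδ]
    simp only
    rw [hfx] at hcx
    rw [hfx, hcx]
  -- Icc 1 N ⊆ T
  have hsub : Finset.Icc 1 N ⊆ T := by
    intro m hm
    rw [Finset.mem_Icc] at hm
    have hm0 : m ≠ 0 := by omega
    rw [hT, Finset.mem_image]
    refine ⟨(ordCompl[p] m, m.factorization p), ?_, ?_⟩
    · rw [Finset.mem_product]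
      constructor
      · rw [hF, Finset.mem_filter, Finset.mem_range]
        exact ⟨by have := Nat.ordCompl_le m p; omega, Nat.not_dvd_ordCompl hp.out hm0⟩
      · rw [Finset.mem_range]
        have h1 : p ^ (m.factorization p) ≤ m := Nat.ordProj_le p hm0
        have h2 : m.factorization p < p ^ (m.factorization p) :=
          Nat.lt_pow_self hp.out.one_lt
        omega
    · rw [he]
      simp only
      rw [mul_comm]
      exact Nat.ordProj_mul_ordCompl_eq_self m p
  -- elements of T outside Icc 1 N are > N
  have hbig : ∀ m ∈ T \ Finset.Icc 1 N, N + 1 ≤ m := by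
    intro m hm
    rw [Finset.mem_sdiff, hT, Finset.mem_image] at hm
    obtain ⟨⟨⟨j, i⟩, hx, hxm⟩, hnot⟩ := hm
    rw [Finset.mem_product] at hx
    obtain ⟨_, hj1, _⟩ := hjF j hx.1
    have hm1 : 1 ≤ m := by
      rw [← hxm, he]
      simp only
      exact Nat.one_le_iff_ne_zero.mpr (Nat.mul_ne_zero (by omega) (pow_ne_zero _ hp.out.pos.ne'))
    rw [Finset.mem_Icc] at hnot
    omega
  rw [hprodT, ← Finset.prod_sdiff hsub]
  have key : (∏ m ∈ T \ Finset.Icc 1 N, g m) * (∏ m ∈ Finset.Icc 1 N, g m)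
      - ∏ m ∈ Finset.Icc 1 N, (1 + X ^ m) ^ (δ m)
      = ((∏ m ∈ T \ Finset.Icc 1 N, g m) - 1) * ∏ m ∈ Finset.Icc 1 N, g m := by
    rw [hg]; ring
  rw [key]
  apply Dvd.dvd.mul_right
  apply dvd_prod_sub_one
  intro m hm
  exact hone (hbig m hm)

end Expand

section Unique

variable {p : ℕ} [hp : Fact p.Prime]

lemma digits_unique {M D : ℕ} (δ δ' : ℕ → ℕ) (hδ : ∀ m, δ m < p) (hδ' : ∀ m, δ' m < p)
    (h : (X : PowerSeries (ZMod p)) ^ D ∣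
      (∏ m ∈ Finset.Icc 1 M, (1 + X ^ m) ^ (δ m))
      - ∏ m ∈ Finset.Icc 1 M, (1 + X ^ m) ^ (δ' m)) :
    ∀ m, m ≤ M → m < D → 1 ≤ m → δ m = δ' m := by
  intro m
  induction m using Nat.strong_induction_on with
  | _ m ih =>
    intro hmM hmD hm1
    -- generic reduction
    have claim : ∀ c : ℕ → ℕ, (X : PowerSeries (ZMod p)) ^ (m + 1) ∣
        (∏ k ∈ Finset.Icc 1 M, (1 + X ^ k) ^ (c k))
        - (∏ k ∈ Finset.Icc 1 (m - 1), (1 + X ^ k) ^ (c k)) * (1 + (c m : PowerSeries (ZMod p)) * X ^ m) := by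
      intro c
      have h0 : ∏ k ∈ Finset.Icc 1 M, (1 + X ^ k : PowerSeries (ZMod p)) ^ (c k)
          = (∏ k ∈ Finset.Icc 1 m, (1 + X ^ k) ^ (c k)) * ∏ k ∈ Finset.Ioc m M, (1 + X ^ k) ^ (c k) := by
        rw [show Finset.Icc 1 m = Finset.Ioc 0 m from Finset.Icc_add_one_left_eq_Ioc 0 m,
          show Finset.Icc 1 M = Finset.Ioc 0 M from Finset.Icc_add_one_left_eq_Ioc 0 M,
          Finset.prod_Ioc_consecutive _ (Nat.zero_le m) hmM]
      have h1 : ∏ k ∈ Finset.Icc 1 m, (1 + X ^ k : PowerSeries (ZMod p)) ^ (c k)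
          = (∏ k ∈ Finset.Icc 1 (m - 1), (1 + X ^ k) ^ (c k)) * (1 + X ^ m) ^ (c m) := by
        conv_lhs => rw [show m = m - 1 + 1 by omega]
        rw [Finset.prod_Icc_succ_top (by omega : 1 ≤ m - 1 + 1)]
        rw [show m - 1 + 1 = m by omega]
      have h2 : (X : PowerSeries (ZMod p)) ^ (m + 1) ∣
          ((1 + X ^ m) ^ (c m) * ∏ k ∈ Finset.Ioc m M, (1 + X ^ k) ^ (c k))
          - (1 + (c m : PowerSeries (ZMod p)) * X ^ m) * 1 := by
        apply dvd_sub_mul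
        · exact bin (by omega) (c m)
        · apply dvd_prod_sub_one
          intro k hk
          rw [Finset.mem_Ioc] at hk
          exact hone (by omega)
      have key : (∏ k ∈ Finset.Icc 1 M, (1 + X ^ k : PowerSeries (ZMod p)) ^ (c k))
          - (∏ k ∈ Finset.Icc 1 (m - 1), (1 + X ^ k) ^ (c k)) * (1 + (c m : PowerSeries (ZMod p)) * X ^ m)
          = (∏ k ∈ Finset.Icc 1 (m - 1), (1 + X ^ k) ^ (c k)) *
            (((1 + X ^ m) ^ (c m) * ∏ k ∈ Finset.Ioc m M, (1 + X ^ k) ^ (c k))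
              - (1 + (c m : PowerSeries (ZMod p)) * X ^ m) * 1) := by
        rw [h0, h1]; ring
      rw [key]
      exact h2.mul_left _
    -- the common prefix products agree
    have hA : ∏ k ∈ Finset.Icc 1 (m - 1), (1 + X ^ k : PowerSeries (ZMod p)) ^ (δ k)
        = ∏ k ∈ Finset.Icc 1 (m - 1), (1 + X ^ k) ^ (δ' k) := by
      apply Finset.prod_congr rfl
      intro k hk
      rw [Finset.mem_Icc] at hk
      rw [ih k (by omega) (by omega) (by omega) hk.1]
    set A := ∏ k ∈ Finset.Icc 1 (m - 1), (1 + X ^ k : PowerSeries (ZMod p)) ^ (δ k) with hAdef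
    have hdvd : (X : PowerSeries (ZMod p)) ^ (m + 1) ∣
        A * (1 + (δ m : PowerSeries (ZMod p)) * X ^ m)
        - A * (1 + (δ' m : PowerSeries (ZMod p)) * X ^ m) := by
      have hD : (X : PowerSeries (ZMod p)) ^ (m + 1) ∣
          (∏ k ∈ Finset.Icc 1 M, (1 + X ^ k) ^ (δ k))
          - ∏ k ∈ Finset.Icc 1 M, (1 + X ^ k) ^ (δ' k) :=
        (pow_dvd_pow _ (by omega : m + 1 ≤ D)).trans h
      have e1 := claim δ
      have e2 := claim δ'
      rw [← hA] at e2
      have key : A * (1 + (δ m : PowerSeries (ZMod p)) * X ^ m)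
          - A * (1 + (δ' m : PowerSeries (ZMod p)) * X ^ m)
          = ((∏ k ∈ Finset.Icc 1 M, (1 + X ^ k) ^ (δ k))
              - ∏ k ∈ Finset.Icc 1 M, (1 + X ^ k) ^ (δ' k))
            - ((∏ k ∈ Finset.Icc 1 M, (1 + X ^ k) ^ (δ k))
                - A * (1 + (δ m : PowerSeries (ZMod p)) * X ^ m))
            + ((∏ k ∈ Finset.Icc 1 M, (1 + X ^ k) ^ (δ' k))
                - A * (1 + (δ' m : PowerSeries (ZMod p)) * X ^ m)) := by
        ring
      rw [key]
      exact dvd_add (dvd_sub hD e1) e2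
    -- extract the coefficient at `m`
    have hc : coeff m
        (A * (1 + (δ m : PowerSeries (ZMod p)) * X ^ m)
          - A * (1 + (δ' m : PowerSeries (ZMod p)) * X ^ m)) = 0 :=
      (X_pow_dvd_iff.mp hdvd) m (by omega)
    have hre : A * (1 + (δ m : PowerSeries (ZMod p)) * X ^ m)
        - A * (1 + (δ' m : PowerSeries (ZMod p)) * X ^ m)
        = (A * ((δ m : PowerSeries (ZMod p)) - (δ' m : PowerSeries (ZMod p)))) * X ^ m := by
      ring
    rw [hre] at hc
    have hc0 : coeff m ((A * ((δ m : PowerSeries (ZMod p)) - (δ' m : PowerSeries (ZMod p)))) * X ^ m)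
        = coeff 0 (A * ((δ m : PowerSeries (ZMod p)) - (δ' m : PowerSeries (ZMod p)))) := by
      have := PowerSeries.coeff_mul_X_pow (A * ((δ m : PowerSeries (ZMod p)) - (δ' m : PowerSeries (ZMod p)))) m 0
      simpa using this
    rw [hc0] at hc
    have hAc : constantCoeff A = 1 := by
      rw [hAdef]
      exact constantCoeff_prod_one p _ _ (fun k hk => (Finset.mem_Icc.mp hk).1)
    rw [coeff_zero_eq_constantCoeff, map_mul, hAc, one_mul, map_sub] at hc
    have hcast : ((δ m : ZMod p)) = ((δ' m : ZMod p)) := by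
      have h1 : constantCoeff ((δ m : ℕ) : PowerSeries (ZMod p)) = ((δ m : ℕ) : ZMod p) := by
        rw [map_natCast]
      have h2 : constantCoeff ((δ' m : ℕ) : PowerSeries (ZMod p)) = ((δ' m : ℕ) : ZMod p) := by
        rw [map_natCast]
      rw [h1, h2] at hc
      exact sub_eq_zero.mp hc
    have := congrArg ZMod.val hcast
    rwa [ZMod.val_cast_of_lt (hδ m), ZMod.val_cast_of_lt (hδ' m)] at this

end Unique

section Main

variable {p : ℕ} [hp : Fact p.Prime]

lemma ord_facts {j : ℕ} (hj : ¬ p ∣ j) (i : ℕ) :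
    (j * p ^ i).factorization p = i ∧ ordCompl[p] (j * p ^ i) = j := by
  have hj0 : j ≠ 0 := by rintro rfl; exact hj (dvd_zero p)
  have hfac : (j * p ^ i).factorization p = i := by
    rw [Nat.factorization_mul hj0 (pow_ne_zero i hp.out.pos.ne'), hp.out.factorization_pow]
    simp [Nat.factorization_eq_zero_of_not_dvd hj]
  exact ⟨hfac, by rw [hfac, mul_comm, Nat.mul_div_cancel_left _ (pow_pos hp.out.pos i)]⟩

/-- The canonical exponents. -/
noncomputable def ncan (u : PowerSeries (ZMod p)) : ℕ → ℤ_[p] :=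
  fun j => if p ∣ j then 0 else ∑' i, (gc p u (j * p ^ i) : ℤ_[p]) * (p : ℤ_[p]) ^ i

lemma appr_ncan (u : PowerSeries (ZMod p)) {j : ℕ} (hj : ¬ p ∣ j) (N : ℕ) :
    (ncan u j).appr N = ∑ i ∈ Finset.range N, gc p u (j * p ^ i) * p ^ i := by
  have hsum : Summable (fun i => (gc p u (j * p ^ i) : ℤ_[p]) * (p : ℤ_[p]) ^ i) :=
    summable_digit_series (fun i => gc p u (j * p ^ i))
  apply appr_unique
  · exact sum_digits_lt hp.out.one_lt _ (fun i => gc_lt p u _) N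
  · rw [ncan, if_neg hj]
    have hcast : ((∑ i ∈ Finset.range N, gc p u (j * p ^ i) * p ^ i : ℕ) : ℤ_[p])
        = ∑ i ∈ Finset.range N, (gc p u (j * p ^ i) : ℤ_[p]) * (p : ℤ_[p]) ^ i := by
      push_cast
      rfl
    rw [hcast]
    have hsplit := hsum.sum_add_tsum_nat_add N
    have : (∑' i, (gc p u (j * p ^ i) : ℤ_[p]) * (p : ℤ_[p]) ^ i)
        - ∑ i ∈ Finset.range N, (gc p u (j * p ^ i) : ℤ_[p]) * (p : ℤ_[p]) ^ i
        = ∑' i, (gc p u (j * p ^ (i + N)) : ℤ_[p]) * (p : ℤ_[p]) ^ (i + N) := by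
      rw [← hsplit]; ring
    rw [this]
    have hterm : ∀ i, (gc p u (j * p ^ (i + N)) : ℤ_[p]) * (p : ℤ_[p]) ^ (i + N)
        = (p : ℤ_[p]) ^ N * ((gc p u (j * p ^ (i + N)) : ℤ_[p]) * (p : ℤ_[p]) ^ i) := by
      intro i; rw [pow_add]; ring
    rw [tsum_congr hterm,
      (summable_digit_series (fun i => gc p u (j * p ^ (i + N)))).tsum_mul_left _]
    exact Dvd.intro _ rfl

lemma main_dvd (u : PowerSeries (ZMod p)) (hu : constantCoeff u = 1)
    {d N : ℕ} (hN : d ≤ N) :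
    (X : PowerSeries (ZMod p)) ^ d ∣
      ((∏ j ∈ (Finset.range (N + 1)).filter fun j => ¬ p ∣ j,
        (1 + X ^ j : PowerSeries (ZMod p)) ^ (((ncan u j)).appr N)) - u) := by
  set a : ℕ → ℕ := fun j => (ncan u j).appr N with ha
  have halt : ∀ j, a j < p ^ N := fun j => PadicInt.appr_lt _ _
  have hexp := expand N a halt
  have hδ : ∀ m ∈ Finset.Icc 1 N,
      (1 + X ^ m : PowerSeries (ZMod p)) ^ (dig p (a (ordCompl[p] m)) (m.factorization p))
      = (1 + X ^ m) ^ (gc p u m) := by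
    intro m hm
    rw [Finset.mem_Icc] at hm
    have hm0 : m ≠ 0 := by omega
    set j := ordCompl[p] m with hjdef
    set ν := m.factorization p with hν
    have hj : ¬ p ∣ j := Nat.not_dvd_ordCompl hp.out hm0
    have hνN : ν < N := by
      have h1 : p ^ ν ≤ m := Nat.ordProj_le p hm0
      have h2 : ν < p ^ ν := Nat.lt_pow_self hp.out.one_lt
      omega
    have haj : a j = ∑ i ∈ Finset.range N, gc p u (j * p ^ i) * p ^ i := by
      rw [ha]; exact appr_ncan u hj N
    have hdig : dig p (a j) ν = gc p u (j * p ^ ν) := by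
      rw [haj]
      exact dig_sum hp.out.one_lt N _ (fun i => gc_lt p u _) ν hνN
    have hjm : j * p ^ ν = m := by
      rw [hjdef, hν, mul_comm]
      exact Nat.ordProj_mul_ordCompl_eq_self m p
    rw [hdig, hjm]
  rw [Finset.prod_congr rfl hδ] at hexp
  have hinv := gc_inv p u hu N
  have key : (∏ j ∈ (Finset.range (N + 1)).filter fun j => ¬ p ∣ j,
        (1 + X ^ j : PowerSeries (ZMod p)) ^ (a j)) - u
      = ((∏ j ∈ (Finset.range (N + 1)).filter fun j => ¬ p ∣ j,
          (1 + X ^ j : PowerSeries (ZMod p)) ^ (a j))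
        - ∏ m ∈ Finset.Icc 1 N, (1 + X ^ m) ^ (gc p u m))
        - (u - ∏ m ∈ Finset.Icc 1 N, (1 + X ^ m) ^ (gc p u m)) := by ring
  have : (X : PowerSeries (ZMod p)) ^ (N + 1) ∣
      (∏ j ∈ (Finset.range (N + 1)).filter fun j => ¬ p ∣ j,
        (1 + X ^ j : PowerSeries (ZMod p)) ^ (a j)) - u := by
    rw [key]
    exact dvd_sub hexp hinv
  exact (pow_dvd_pow _ (by omega : d ≤ N + 1)).trans this

end Main

/-- The family `{E_j = 1 + t^j : p ∤ j}` is a topological `ℤ_p`-basis of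
`U₁ = 1 + tF_p[[t]]`: every power series with constant term `1` is, in a unique way, the
`t`-adic limit of the partial products `∏_{j ≤ N, p ∤ j} (1 + t^j)^{n_j mod p^N}`
for exponents `n_j ∈ ℤ_p` (here `(n j).appr N` is the approximation of `n_j` mod `p^N`). -/
theorem principal_units_topological_basis (p : ℕ) [Fact p.Prime]
    (u : PowerSeries (ZMod p)) (hu : constantCoeff u = 1) :
    ∃! n : ℕ → ℤ_[p], (∀ j, p ∣ j → n j = 0) ∧
      ∀ d : ℕ, ∃ N₀ : ℕ, ∀ N ≥ N₀,
        (X : PowerSeries (ZMod p)) ^ d ∣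
          ((∏ j ∈ (Finset.range (N + 1)).filter fun j => ¬ p ∣ j,
            (1 + X ^ j : PowerSeries (ZMod p)) ^ ((n j).appr N)) - u) := by
  have hpp : p.Prime := Fact.out
  refine ⟨ncan u, ⟨fun j hj => by rw [ncan, if_pos hj], fun d => ⟨d, fun N hN => main_dvd u hu hN⟩⟩, ?_⟩
  rintro n' ⟨hz, hmain⟩
  funext j
  by_cases hj : p ∣ j
  · rw [hz j hj, ncan, if_pos hj]
  -- now show `n' j = ncan u j` via all `p ^ K` congruences
  have hdvdK : ∀ K : ℕ, (p : ℤ_[p]) ^ K ∣ n' j - ncan u j := by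
    intro K
    set d : ℕ := j * p ^ K + 1 with hd
    obtain ⟨N₀, hN₀⟩ := hmain d
    set N : ℕ := N₀ + d + K + j * p ^ K with hNdef
    have h1 : (X : PowerSeries (ZMod p)) ^ d ∣
        (∏ j ∈ (Finset.range (N + 1)).filter fun j => ¬ p ∣ j,
          (1 + X ^ j : PowerSeries (ZMod p)) ^ ((n' j).appr N)) - u := hN₀ N (by omega)
    have h2 := main_dvd (p := p) u hu (show d ≤ N by omega)
    -- difference of the two partial products
    have h3 : (X : PowerSeries (ZMod p)) ^ d ∣
        (∏ j ∈ (Finset.range (N + 1)).filter fun j => ¬ p ∣ j,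
          (1 + X ^ j : PowerSeries (ZMod p)) ^ ((n' j).appr N))
        - ∏ j ∈ (Finset.range (N + 1)).filter fun j => ¬ p ∣ j,
          (1 + X ^ j : PowerSeries (ZMod p)) ^ ((ncan u j).appr N) := by
      have key : (∏ j ∈ (Finset.range (N + 1)).filter fun j => ¬ p ∣ j,
          (1 + X ^ j : PowerSeries (ZMod p)) ^ ((n' j).appr N))
          - ∏ j ∈ (Finset.range (N + 1)).filter fun j => ¬ p ∣ j,
            (1 + X ^ j : PowerSeries (ZMod p)) ^ ((ncan u j).appr N)
          = ((∏ j ∈ (Finset.range (N + 1)).filter fun j => ¬ p ∣ j,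
              (1 + X ^ j : PowerSeries (ZMod p)) ^ ((n' j).appr N)) - u)
            - ((∏ j ∈ (Finset.range (N + 1)).filter fun j => ¬ p ∣ j,
              (1 + X ^ j : PowerSeries (ZMod p)) ^ ((ncan u j).appr N)) - u) := by ring
      rw [key]
      exact dvd_sub h1 h2
    -- expand both into digit products over `Icc 1 N`
    set a' : ℕ → ℕ := fun i => (n' i).appr N with ha'
    set a : ℕ → ℕ := fun i => (ncan u i).appr N with ha
    set δ' : ℕ → ℕ := fun m => dig p (a' (ordCompl[p] m)) (m.factorization p) with hδ'
    set δ : ℕ → ℕ := fun m => dig p (a (ordCompl[p] m)) (m.factorization p) with hδ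
    have he1 := expand N a' (fun i => PadicInt.appr_lt _ _)
    have he2 := expand N a (fun i => PadicInt.appr_lt _ _)
    have h4 : (X : PowerSeries (ZMod p)) ^ d ∣
        (∏ m ∈ Finset.Icc 1 N, (1 + X ^ m) ^ (δ' m))
        - ∏ m ∈ Finset.Icc 1 N, (1 + X ^ m) ^ (δ m) := by
      have hdN : d ≤ N + 1 := by omega
      have he1' := (pow_dvd_pow (X : PowerSeries (ZMod p)) hdN).trans he1
      have he2' := (pow_dvd_pow (X : PowerSeries (ZMod p)) hdN).trans he2
      have key : (∏ m ∈ Finset.Icc 1 N, (1 + X ^ m : PowerSeries (ZMod p)) ^ (δ' m))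
          - ∏ m ∈ Finset.Icc 1 N, (1 + X ^ m) ^ (δ m)
          = ((∏ j ∈ (Finset.range (N + 1)).filter fun j => ¬ p ∣ j,
              (1 + X ^ j : PowerSeries (ZMod p)) ^ (a' j))
            - ∏ j ∈ (Finset.range (N + 1)).filter fun j => ¬ p ∣ j,
              (1 + X ^ j : PowerSeries (ZMod p)) ^ (a j))
            - ((∏ j ∈ (Finset.range (N + 1)).filter fun j => ¬ p ∣ j,
                (1 + X ^ j : PowerSeries (ZMod p)) ^ (a' j))
              - ∏ m ∈ Finset.Icc 1 N, (1 + X ^ m) ^ (δ' m))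
            + ((∏ j ∈ (Finset.range (N + 1)).filter fun j => ¬ p ∣ j,
                (1 + X ^ j : PowerSeries (ZMod p)) ^ (a j))
              - ∏ m ∈ Finset.Icc 1 N, (1 + X ^ m) ^ (δ m)) := by ring
      rw [key]
      exact dvd_add (dvd_sub h3 he1') he2'
    -- digit-by-digit equality
    have hdig := digits_unique δ' δ (fun m => dig_lt hpp.pos _ _) (fun m => dig_lt hpp.pos _ _) h4
    -- hence the digits of `a' j` and `a j` agree below `K`
    have hdigj : ∀ i < K, dig p (a' j) i = dig p (a j) i := by
      intro i hi
      have hip : i < p ^ i := Nat.lt_pow_self hpp.one_lt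
      have hpi : p ^ i ≤ p ^ K := Nat.pow_le_pow_right hpp.pos (by omega)
      have hj1 : 1 ≤ j := by
        rcases Nat.eq_zero_or_pos j with h | h
        · exact absurd (h ▸ dvd_zero p) hj
        · omega
      have hm1 : 1 ≤ j * p ^ i := Nat.one_le_iff_ne_zero.mpr
        (Nat.mul_ne_zero (by omega) (pow_ne_zero _ hpp.pos.ne'))
      have hmle : j * p ^ i ≤ j * p ^ K := Nat.mul_le_mul_left _ hpi
      have hmN : j * p ^ i ≤ N := by omega
      have hmd : j * p ^ i < d := by omega
      have := hdig (j * p ^ i) hmN hmd hm1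
      rw [hδ', hδ] at this
      simp only at this
      obtain ⟨hfac, hoc⟩ := ord_facts hj i
      rw [hfac] at hoc this
      rwa [hoc] at this
    -- a' j ≡ a j mod p ^ K
    have hmod : a' j ≡ a j [MOD p ^ K] := by
      unfold Nat.ModEq
      rw [← dig_mod p hpp.pos K (a' j), ← dig_mod p hpp.pos K (a j)]
      apply Finset.sum_congr rfl
      intro i hi
      rw [Finset.mem_range] at hi
      rw [hdigj i hi]
    have hd1 : (p : ℤ_[p]) ^ K ∣ (a' j : ℤ_[p]) - (a j : ℤ_[p]) := padic_dvd_of_natCast hmod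
    have hd2 : (p : ℤ_[p]) ^ K ∣ n' j - (a' j : ℤ_[p]) := by
      have := Ideal.mem_span_singleton.mp (PadicInt.appr_spec N (n' j))
      exact (pow_dvd_pow _ (show K ≤ N by omega)).trans this
    have hd3 : (p : ℤ_[p]) ^ K ∣ ncan u j - (a j : ℤ_[p]) := by
      have := Ideal.mem_span_singleton.mp (PadicInt.appr_spec N (ncan u j))
      exact (pow_dvd_pow _ (show K ≤ N by omega)).trans this
    have key : n' j - ncan u j
        = (n' j - (a' j : ℤ_[p])) + ((a' j : ℤ_[p]) - (a j : ℤ_[p]))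
          - (ncan u j - (a j : ℤ_[p])) := by ring
    rw [key]
    exact dvd_sub (dvd_add hd2 hd1) hd3
  have := padic_eq_zero_of_forall_dvd hdvdK
  exact sub_eq_zero.mp this
end

section
/- Let p be a prime, U_1 = 1 + tF_p[[t]], and let χ : U_1 → ℤ/p²ℤ be a continuous surjective group homomorphism (where U_1 has the t-adic topology and ℤ/p²ℤ the discrete topology). For j ≥ 1 let b^{(j−1)} denote the largest positive integer b such that χ(1 + t^b F_p[[t]]) ⊄ p^j ℤ/p²ℤ. Then b^{(0)} is coprime to p. -/
open PowerSeries

/-- The subgroup `1 + t^k F_p[[t]]` of the units of `F_p[[t]]`. -/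
def Ugrp (p k : ℕ) : Subgroup (PowerSeries (ZMod p))ˣ where
  carrier := {u | (X : PowerSeries (ZMod p)) ^ k ∣ ((u : PowerSeries (ZMod p)) - 1)}
  one_mem' := by simp
  mul_mem' := by
    intro a b ha hb
    have h : ((a * b : (PowerSeries (ZMod p))ˣ) : PowerSeries (ZMod p)) - 1
        = (a : PowerSeries (ZMod p)) * ((b : PowerSeries (ZMod p)) - 1)
          + ((a : PowerSeries (ZMod p)) - 1) := by push_cast; ring
    rw [Set.mem_setOf_eq, h]
    exact dvd_add (Dvd.dvd.mul_left hb _) ha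
  inv_mem' := by
    intro a ha
    have key : ((a⁻¹ : (PowerSeries (ZMod p))ˣ) : PowerSeries (ZMod p)) - 1
        = -(((a⁻¹ : (PowerSeries (ZMod p))ˣ) : PowerSeries (ZMod p))
            * ((a : PowerSeries (ZMod p)) - 1)) := by
      rw [mul_sub, Units.inv_mul]; ring
    rw [Set.mem_setOf_eq, key]
    exact dvd_neg.mpr (Dvd.dvd.mul_left ha _)

/-- `χ` is a homomorphism from the multiplicative group `U₁` to `ℤ/p²ℤ`. -/
def IsHom (p : ℕ) (χ : Ugrp p 1 → ZMod (p ^ 2)) : Prop :=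
  ∀ a b : Ugrp p 1, χ (a * b) = χ a + χ b

/-- Continuity of `χ` (the target being discrete): `χ` kills some `1 + t^N F_p[[t]]`. -/
def IsCont (p : ℕ) (χ : Ugrp p 1 → ZMod (p ^ 2)) : Prop :=
  ∃ N : ℕ, ∀ u : Ugrp p 1,
    (X : PowerSeries (ZMod p)) ^ N ∣ ((u : (PowerSeries (ZMod p))ˣ) : PowerSeries (ZMod p)) - 1 →
      χ u = 0

/-- The break sequence of `χ : U₁ → ℤ/p²ℤ` is `⟨b0, b1⟩`: `b^{(j-1)}` is the largest
positive `b` such that `χ(1 + t^b F_p[[t]])` is not contained in `p^j · ℤ/p²ℤ`. -/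
def HasBreaks (p : ℕ) (χ : Ugrp p 1 → ZMod (p ^ 2)) (b0 b1 : ℕ) : Prop :=
  IsGreatest {b : ℕ | 0 < b ∧ ∃ u : Ugrp p 1,
    ((X : PowerSeries (ZMod p)) ^ b ∣ ((u : (PowerSeries (ZMod p))ˣ) : PowerSeries (ZMod p)) - 1)
      ∧ ¬ (p : ZMod (p ^ 2)) ∣ χ u} b0 ∧
  IsGreatest {b : ℕ | 0 < b ∧ ∃ u : Ugrp p 1,
    ((X : PowerSeries (ZMod p)) ^ b ∣ ((u : (PowerSeries (ZMod p))ˣ) : PowerSeries (ZMod p)) - 1)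
      ∧ χ u ≠ 0} b1

lemma chi_one {p : ℕ} (χ : Ugrp p 1 → ZMod (p ^ 2)) (hhom : IsHom p χ) : χ 1 = 0 := by
  have := hhom 1 1
  simp only [mul_one] at this
  nth_rewrite 1 [← add_zero (χ 1)] at this
  exact (add_left_cancel this).symm

lemma chi_pow {p : ℕ} (χ : Ugrp p 1 → ZMod (p ^ 2)) (hhom : IsHom p χ)
    (a : Ugrp p 1) (n : ℕ) : χ (a ^ n) = n • χ a := by
  induction n with
  | zero => simpa using chi_one χ hhom
  | succ n ih =>
    have h1 : χ (a ^ (n + 1)) = χ (a ^ n) + χ a :=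
      (congrArg χ (pow_succ a n)).trans (hhom _ _)
    rw [h1, ih, succ_nsmul]

/-- The first break `b0` of a continuous surjective character `χ : U₁ → ℤ/p²ℤ`
is coprime to `p`. -/
theorem first_break_coprime (p : ℕ) [Fact p.Prime] (χ : Ugrp p 1 → ZMod (p ^ 2))
    (hhom : IsHom p χ) (hcont : IsCont p χ) (hsurj : Function.Surjective χ)
    (b0 b1 : ℕ) (hb : HasBreaks p χ b0 b1) : Nat.Coprime p b0 := by
  haveI : CharP (PowerSeries (ZMod p)) p :=
    charP_of_injective_ringHom (C_injective (R := ZMod p)) p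
  have hp : p.Prime := Fact.out
  rw [hp.coprime_iff_not_dvd]
  intro hdvd
  obtain ⟨⟨hb0pos, u, hu, hchu⟩, hub⟩ := hb.1
  obtain ⟨c, rfl⟩ := hdvd
  have hc : 0 < c := by
    rcases Nat.eq_zero_or_pos c with h | h
    · simp [h] at hb0pos
    · exact h
  obtain ⟨g, hg⟩ := hu
  set a : ZMod p := constantCoeff (R := ZMod p) g with ha
  set v : PowerSeries (ZMod p) := 1 + X ^ c * C (R := ZMod p) a with hv
  have hvu : IsUnit v := by
    rw [isUnit_iff_constantCoeff, hv]
    simp [map_pow, zero_pow hc.ne']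
  have hVmem : hvu.unit ∈ Ugrp p 1 := by
    show (X : PowerSeries (ZMod p)) ^ 1 ∣ _
    rw [hvu.unit_spec, hv, pow_one]
    ring_nf
    exact Dvd.dvd.mul_right (dvd_pow_self X hc.ne') _
  set V : Ugrp p 1 := ⟨hvu.unit, hVmem⟩ with hV
  have hvp : v ^ p = 1 + X ^ (p * c) * C (R := ZMod p) a := by
    rw [hv, add_pow_char, one_pow, mul_pow, ← pow_mul, ← map_pow, ZMod.pow_card,
      mul_comm c p]
  set W : Ugrp p 1 := (V ^ p)⁻¹ * u with hW
  have hkey : χ u = p • χ V + χ W := by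
    have : u = V ^ p * W := by rw [hW, mul_inv_cancel_left]
    rw [this, hhom, chi_pow χ hhom]
  -- the underlying power series of W minus one is divisible by X^(p*c+1)
  have hWdvd : (X : PowerSeries (ZMod p)) ^ (p * c + 1) ∣
      ((W : (PowerSeries (ZMod p))ˣ) : PowerSeries (ZMod p)) - 1 := by
    have hVp : (((V ^ p : Ugrp p 1) : (PowerSeries (ZMod p))ˣ) : PowerSeries (ZMod p))
        = v ^ p := by
      push_cast [hV]
      rw [hvu.unit_spec]
    have hdiff : (X : PowerSeries (ZMod p)) ^ (p * c + 1) ∣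
        (((u : (PowerSeries (ZMod p))ˣ) : PowerSeries (ZMod p)) - v ^ p) := by
      have : ((u : (PowerSeries (ZMod p))ˣ) : PowerSeries (ZMod p)) - v ^ p
          = X ^ (p * c) * (g - C (R := ZMod p) a) := by
        rw [hvp, mul_sub]
        rw [sub_eq_iff_eq_add] at hg
        rw [hg]
        ring
      rw [this, pow_succ]
      apply mul_dvd_mul dvd_rfl
      rw [X_dvd_iff]
      simp [ha]
    have hWeq : ((W : (PowerSeries (ZMod p))ˣ) : PowerSeries (ZMod p)) - 1
        = (((((V ^ p : Ugrp p 1))⁻¹ : (PowerSeries (ZMod p))ˣ) : PowerSeries (ZMod p)))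
          * (((u : (PowerSeries (ZMod p))ˣ) : PowerSeries (ZMod p)) - v ^ p) := by
      rw [hW]
      push_cast
      rw [mul_sub, ← hVp]
      push_cast
      rw [← mul_pow, Units.inv_mul, one_pow]
    rw [hWeq]
    exact Dvd.dvd.mul_left hdiff _
  have hWchi : (p : ZMod (p ^ 2)) ∣ χ W := by
    by_contra hnot
    have hmem : p * c + 1 ∈ {b : ℕ | 0 < b ∧ ∃ u : Ugrp p 1,
        ((X : PowerSeries (ZMod p)) ^ b ∣
          ((u : (PowerSeries (ZMod p))ˣ) : PowerSeries (ZMod p)) - 1)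
          ∧ ¬ (p : ZMod (p ^ 2)) ∣ χ u} := ⟨Nat.succ_pos _, W, hWdvd, hnot⟩
    have := hub hmem
    omega
  apply hchu
  rw [hkey]
  exact dvd_add ⟨χ V, by rw [nsmul_eq_mul]⟩ hWchi
end

section
/- Let p be a prime, let χ : U_1 → ℤ/p²ℤ be a continuous character of type ⟨l, m⟩ with standard expansion χ = Σ_{1≤i≤l, p∤i} x_i Ξ_i + Σ_{1≤j≤m, p∤j} a_j·p·Ξ_j, and let u(t) ∈ 𝒩 be any element of the Nottingham group. Then (ᵤχ)(E_l) ≡ x_l ≡ χ(E_l) (mod p), where ᵤχ(f) := χ(f ∘ u / constant-normalization) denotes the twisted character ᵤχ(f(t)) = χ(f(u(t))) for f ∈ U_1 viewed as a power series in t. -/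
open PowerSeries

/-- `E j = 1 + t^j` as an element of the principal units `U₁`. -/
noncomputable def Eu (p : ℕ) [Fact p.Prime] (j : ℕ) (hj : 0 < j) : Ugrp p 1 := by
  have hu : IsUnit (1 + X ^ j : PowerSeries (ZMod p)) := by
    rw [isUnit_iff_constantCoeff]
    simp [zero_pow hj.ne']
  refine ⟨hu.unit, ?_⟩
  show (X : PowerSeries (ZMod p)) ^ 1 ∣ _
  rw [IsUnit.unit_spec, pow_one, add_sub_cancel_left]
  exact dvd_pow_self X hj.ne'

/-- Lemma (evaluation, part (a)): for `χ` of type `⟨l, m⟩` with standard-expansion leading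
coefficient `x_l = χ(E_l) mod p`, and any `u` in the Nottingham group,
`(ᵤχ)(E_l) = χ(1 + u^l) ≡ x_l ≡ χ(E_l) (mod p)`. -/
theorem twisted_char_eval_El (p : ℕ) [Fact p.Prime] (l m : ℕ) (hl : 0 < l)
    (χ : Ugrp p 1 → ZMod (p ^ 2)) (hhom : IsHom p χ) (hcont : IsCont p χ)
    (hb : HasBreaks p χ l m)
    (u : PowerSeries (ZMod p)) (hu0 : constantCoeff u = 0)
    (hu1 : coeff 1 u = 1) (xl : ZMod p)
    (hx : ZMod.castHom (dvd_pow_self p two_ne_zero) (ZMod p) (χ (Eu p l hl)) = xl) :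
    ∀ v : Ugrp p 1,
      ((v : (PowerSeries (ZMod p))ˣ) : PowerSeries (ZMod p)) = 1 + u ^ l →
      ZMod.castHom (dvd_pow_self p two_ne_zero) (ZMod p) (χ v) = xl := by
  intro v hv
  set E := Eu p l hl with hE
  have hEval : ((E : (PowerSeries (ZMod p))ˣ) : PowerSeries (ZMod p)) = 1 + X ^ l := by
    simp only [hE, Eu]
    exact IsUnit.unit_spec _
  set w : Ugrp p 1 := E⁻¹ * v with hw
  have hvE : v = E * w := by rw [hw]; group
  obtain ⟨g, hg⟩ := PowerSeries.X_dvd_iff.mpr hu0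
  have hg0 : constantCoeff g = 1 := by
    have := hu1
    rw [hg] at this
    simpa [PowerSeries.coeff_succ_X_mul, PowerSeries.coeff_zero_eq_constantCoeff] using this
  obtain ⟨h, hh⟩ := PowerSeries.X_dvd_iff.mpr (show constantCoeff (g ^ l - 1) = 0 by
    simp [map_pow, hg0])
  have hul : u ^ l - X ^ l = X ^ (l + 1) * h := by
    rw [hg, mul_pow, pow_succ]
    linear_combination ((X : PowerSeries (ZMod p)) ^ l) * hh
  have hdvd : (X : PowerSeries (ZMod p)) ^ (l + 1) ∣
      ((w : (PowerSeries (ZMod p))ˣ) : PowerSeries (ZMod p)) - 1 := by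
    have hwu : ((w : (PowerSeries (ZMod p))ˣ) : PowerSeries (ZMod p))
        = (((E : (PowerSeries (ZMod p))ˣ)⁻¹ : (PowerSeries (ZMod p))ˣ) : PowerSeries (ZMod p))
          * ((v : (PowerSeries (ZMod p))ˣ) : PowerSeries (ZMod p)) := by
      rw [hw]; push_cast; rfl
    have hinv : (((E : (PowerSeries (ZMod p))ˣ)⁻¹ : (PowerSeries (ZMod p))ˣ) : PowerSeries (ZMod p))
        * ((E : (PowerSeries (ZMod p))ˣ) : PowerSeries (ZMod p)) = 1 := by
      rw [← Units.val_mul, inv_mul_cancel, Units.val_one]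
    have hsub : ((v : (PowerSeries (ZMod p))ˣ) : PowerSeries (ZMod p))
        - ((E : (PowerSeries (ZMod p))ˣ) : PowerSeries (ZMod p)) = u ^ l - X ^ l := by
      rw [hv, hEval]; ring
    have key : ((w : (PowerSeries (ZMod p))ˣ) : PowerSeries (ZMod p)) - 1
        = (((E : (PowerSeries (ZMod p))ˣ)⁻¹ : (PowerSeries (ZMod p))ˣ) : PowerSeries (ZMod p))
          * (u ^ l - X ^ l) := by
      rw [hwu]
      linear_combination (((E : (PowerSeries (ZMod p))ˣ)⁻¹ : (PowerSeries (ZMod p))ˣ) : PowerSeries (ZMod p)) * hsub + hinv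
    rw [key, hul]
    exact Dvd.dvd.mul_left ⟨h, rfl⟩ _
  have hpd : (p : ZMod (p ^ 2)) ∣ χ w := by
    by_contra hc
    have hmem : l + 1 ∈ {b : ℕ | 0 < b ∧ ∃ u : Ugrp p 1,
        ((X : PowerSeries (ZMod p)) ^ b ∣ ((u : (PowerSeries (ZMod p))ˣ) : PowerSeries (ZMod p)) - 1)
          ∧ ¬ (p : ZMod (p ^ 2)) ∣ χ u} := ⟨Nat.succ_pos l, w, hdvd, hc⟩
    have := hb.1.2 hmem
    omega
  obtain ⟨c, hc⟩ := hpd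
  have hsum : χ v = χ E + χ w := by rw [hvE]; exact hhom E w
  rw [hsum, map_add, hx, hc, map_mul, map_natCast, ZMod.natCast_self, zero_mul, add_zero]
end

section
/- Let p be a prime, χ : U_1 → ℤ/p²ℤ a continuous character of type ⟨l, m⟩ with p ∤ m and standard expansion having top coefficient a_m (so χ(E_m) = p·a_m). Then for every element u of the Nottingham group 𝒩 over F_p, (ᵤχ)(E_m) = p·a_m, i.e., the coefficient a_m is invariant under the Nottingham group action. -/
open PowerSeries

/-- Lemma (evaluation, part (b)): for `χ` of type `⟨l, m⟩` with `p ∤ m` and top coefficient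
`a_m` (so `χ(E_m) = p·a_m`), and any `u` in the Nottingham group,
`(ᵤχ)(E_m) = χ(1 + u^m) = p·a_m`. -/
theorem twisted_char_eval_Em (p : ℕ) [Fact p.Prime] (l m : ℕ) (hl : 0 < l) (hm0 : 0 < m)
    (hm : ¬ p ∣ m)
    (χ : Ugrp p 1 → ZMod (p ^ 2)) (hhom : IsHom p χ) (hcont : IsCont p χ)
    (hb : HasBreaks p χ l m)
    (u : PowerSeries (ZMod p)) (hu0 : constantCoeff u = 0)
    (hu1 : coeff 1 u = 1) (am : ZMod (p ^ 2))
    (ha : χ (Eu p m hm0) = (p : ZMod (p ^ 2)) * am) :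
    ∀ v : Ugrp p 1,
      ((v : (PowerSeries (ZMod p))ˣ) : PowerSeries (ZMod p)) = 1 + u ^ m →
      χ v = (p : ZMod (p ^ 2)) * am := by
  intro v hv
  set E := Eu p m hm0 with hE
  have hEcoe : ((E : (PowerSeries (ZMod p))ˣ) : PowerSeries (ZMod p)) = 1 + X ^ m := by
    simp [hE, Eu]
  obtain ⟨g, hg⟩ := X_dvd_iff.mpr hu0
  have hg0 : constantCoeff g = 1 := by
    have h := hu1
    rw [hg] at h
    simpa using h
  have hdvd : (X : PowerSeries (ZMod p)) ^ (m + 1) ∣ u ^ m - X ^ m := by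
    rw [hg]
    have h2 : (X * g) ^ m - X ^ m = X ^ m * (g ^ m - 1) := by ring
    rw [h2, pow_succ]
    exact mul_dvd_mul_left _ (X_dvd_iff.mpr (by simp [hg0]))
  set w := v * E⁻¹ with hw
  have hwE : w * E = v := by rw [hw, inv_mul_cancel_right]
  have hwdvd : (X : PowerSeries (ZMod p)) ^ (m + 1) ∣
      ((w : (PowerSeries (ZMod p))ˣ) : PowerSeries (ZMod p)) - 1 := by
    have hc : ((w : (PowerSeries (ZMod p))ˣ) : PowerSeries (ZMod p)) - 1
        = (u ^ m - X ^ m) * (((E⁻¹ : Ugrp p 1) : (PowerSeries (ZMod p))ˣ) : PowerSeries (ZMod p)) := by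
      have hEE : ((E : (PowerSeries (ZMod p))ˣ) : PowerSeries (ZMod p))
          * (((E⁻¹ : Ugrp p 1) : (PowerSeries (ZMod p))ˣ) : PowerSeries (ZMod p)) = 1 := by
        rw [← Units.val_mul, ← Subgroup.coe_mul, mul_inv_cancel]
        simp
      have hwc : ((w : (PowerSeries (ZMod p))ˣ) : PowerSeries (ZMod p))
          = ((v : (PowerSeries (ZMod p))ˣ) : PowerSeries (ZMod p))
            * (((E⁻¹ : Ugrp p 1) : (PowerSeries (ZMod p))ˣ) : PowerSeries (ZMod p)) := by
        rw [hw]; push_cast; ring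
      have hEE' : (1 + X ^ m)
          * (((E⁻¹ : Ugrp p 1) : (PowerSeries (ZMod p))ˣ) : PowerSeries (ZMod p)) = 1 := by
        rw [← hEcoe]; exact hEE
      rw [hwc, hv]
      linear_combination hEE'
    rw [hc]
    exact Dvd.dvd.mul_right hdvd _
  have hχw : χ w = 0 := by
    by_contra hne
    have hmem : (m + 1) ∈ {b : ℕ | 0 < b ∧ ∃ u : Ugrp p 1,
        ((X : PowerSeries (ZMod p)) ^ b ∣ ((u : (PowerSeries (ZMod p))ˣ) : PowerSeries (ZMod p)) - 1)
          ∧ χ u ≠ 0} := ⟨Nat.succ_pos m, w, hwdvd, hne⟩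
    have := hb.2.2 hmem
    omega
  have := hhom w E
  rw [hwE, hχw, zero_add] at this
  rw [this, ha]
end

section
/- Let p be a prime and u an element of order p in the Nottingham group 𝒩 over F_p. For any positive integer n, u and u^n are conjugate in 𝒩 if and only if u = u^n. -/
open PowerSeries

/-- The Nottingham group over `F_p`, realized as the group of (automatically continuous)
ring automorphisms `σ` of `F_p[[t]]` with `σ(t) = t(1 + a₁t + ⋯)`, i.e. wild automorphisms.
`σ` corresponds to the power series `u(t) = σ(t)`. -/
def Nottingham (p : ℕ) [Fact p.Prime] : Subgroup (RingAut (PowerSeries (ZMod p))) where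
  carrier := {σ | constantCoeff (R := ZMod p) (σ X) = 0 ∧ coeff (R := ZMod p) 1 (σ X) = 1}
  one_mem' := by
    constructor
    · show constantCoeff (R := ZMod p) X = 0
      simp
    · show coeff (R := ZMod p) 1 (X : PowerSeries (ZMod p)) = 1
      simp
  mul_mem' := by
    rintro σ τ ⟨h1, h2⟩ ⟨h3, h4⟩
    have hX : (σ * τ) X = σ (τ X) := rfl
    obtain ⟨g, hg⟩ := X_dvd_iff.mpr h3
    have hg1 : constantCoeff (R := ZMod p) g = 1 := by
      have := h4; rw [hg] at this
      rwa [show (1 : ℕ) = 0 + 1 from rfl, coeff_succ_X_mul, coeff_zero_eq_constantCoeff] at this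
    obtain ⟨s, hs⟩ := X_dvd_iff.mpr h1
    have hs1 : constantCoeff (R := ZMod p) s = 1 := by
      have := h2; rw [hs] at this
      rwa [show (1 : ℕ) = 0 + 1 from rfl, coeff_succ_X_mul, coeff_zero_eq_constantCoeff] at this
    -- σ g has constant coefficient 1
    obtain ⟨h', hh'⟩ := X_dvd_iff.mpr
      (show constantCoeff (R := ZMod p) (g - 1) = 0 by simp [hg1])
    have hgd : g = 1 + X * h' := by rw [← hh']; ring
    have hσg : constantCoeff (R := ZMod p) (σ g) = 1 := by
      rw [hgd, map_add, map_mul, map_one, map_add, map_mul, hs]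
      simp
    constructor
    · show constantCoeff (R := ZMod p) ((σ * τ) X) = 0
      rw [hX, hg, map_mul, hs]
      simp [mul_assoc]
    · show coeff (R := ZMod p) 1 ((σ * τ) X) = 1
      rw [hX, hg, map_mul, hs, mul_assoc,
        show (1 : ℕ) = 0 + 1 from rfl, coeff_succ_X_mul, coeff_zero_eq_constantCoeff,
        map_mul, hs1, hσg]
      simp
  inv_mem' := by
    rintro σ ⟨h1, h2⟩
    have hX : σ (σ⁻¹ X) = X := by
      have : (σ * σ⁻¹) X = X := by rw [mul_inv_cancel]; rfl
      exact this
    obtain ⟨s, hs⟩ := X_dvd_iff.mpr h1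
    have hs1 : constantCoeff (R := ZMod p) s = 1 := by
      have := h2; rw [hs] at this
      rwa [show (1 : ℕ) = 0 + 1 from rfl, coeff_succ_X_mul, coeff_zero_eq_constantCoeff] at this
    set f := σ⁻¹ X with hf
    -- write f = C c + X * h
    obtain ⟨h', hh'⟩ := X_dvd_iff.mpr
      (show constantCoeff (R := ZMod p) (f - C (R := ZMod p) (constantCoeff (R := ZMod p) f)) = 0 by simp)
    have hfd : f = C (R := ZMod p) (constantCoeff (R := ZMod p) f) + X * h' := by rw [← hh']; ring
    have hC : ∀ c : ZMod p, σ (C (R := ZMod p) c) = C (R := ZMod p) c := by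
      intro c
      have : (C (R := ZMod p) c) = ((c.val : ℕ) : PowerSeries (ZMod p)) := by
        rw [← map_natCast (C (R := ZMod p)) c.val, ZMod.natCast_val, ZMod.cast_id]
      rw [this, map_natCast]
    have hσf : σ f = X := hX
    have hc0 : constantCoeff (R := ZMod p) f = 0 := by
      have := congrArg (constantCoeff (R := ZMod p)) hσf
      rw [hfd, map_add, map_mul, hC, map_add, map_mul, hs] at this
      simpa [mul_assoc] using this
    have hfd' : f = X * h' := by rw [hfd, hc0]; simp
    constructor
    · exact hc0
    · -- coeff 1 f = constantCoeff h' ; and σ f = X forces constantCoeff (σ h') = 1,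
      -- which equals constantCoeff h'
      have hXh : σ X * σ h' = X := by rw [← map_mul, ← hfd']; exact hσf
      have h1' : constantCoeff (R := ZMod p) (σ h') = 1 := by
        have := congrArg (coeff (R := ZMod p) 1) hXh
        rw [hs, mul_assoc, show (1:ℕ) = 0 + 1 from rfl, coeff_succ_X_mul,
          coeff_zero_eq_constantCoeff, map_mul, hs1, one_mul] at this
        simpa using this
      -- constantCoeff (σ h') = constantCoeff h'
      obtain ⟨h'', hh''⟩ := X_dvd_iff.mpr
        (show constantCoeff (R := ZMod p) (h' - C (R := ZMod p) (constantCoeff (R := ZMod p) h')) = 0 by simp)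
      have : h' = C (R := ZMod p) (constantCoeff (R := ZMod p) h') + X * h'' := by rw [← hh'']; ring
      have hch : constantCoeff (R := ZMod p) (σ h') = constantCoeff (R := ZMod p) h' := by
        rw [this, map_add, map_mul, hC, hs, map_add, map_mul]
        simp [mul_assoc]
      show coeff (R := ZMod p) 1 f = 1
      rw [hfd', show (1:ℕ) = 0 + 1 from rfl, coeff_succ_X_mul, coeff_zero_eq_constantCoeff,
        ← hch, h1']

/-- `u` is an order `p²` element of the Nottingham group of type `⟨l, m⟩`:
via Lubin's correspondence, this is equivalent to the lower ramification data
`v(u(t) - t) = l + 1` and `v(u^p(t) - t) = l + p(m - l) + 1`. -/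
def NottType (p : ℕ) [Fact p.Prime] (u : Nottingham p) (l m : ℕ) : Prop :=
  orderOf u = p ^ 2 ∧
  order ((u : RingAut (PowerSeries (ZMod p))) X - X) = (l + 1 : ℕ) ∧
  order (((u ^ p : Nottingham p) : RingAut (PowerSeries (ZMod p))) X - X)
    = (l + p * (m - l) + 1 : ℕ)

namespace NottAux

variable {p : ℕ} [Fact p.Prime]

lemma sigma_C (σ : RingAut (PowerSeries (ZMod p))) (c : ZMod p) :
    σ (C (R := ZMod p) c) = C (R := ZMod p) c := by
  have : (C (R := ZMod p) c) = ((c.val : ℕ) : PowerSeries (ZMod p)) := by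
    rw [← map_natCast (C (R := ZMod p)) c.val, ZMod.natCast_val, ZMod.cast_id]
  rw [this, map_natCast]

lemma exists_s (σ : RingAut (PowerSeries (ZMod p)))
    (h1 : constantCoeff (R := ZMod p) (σ X) = 0) (h2 : coeff (R := ZMod p) 1 (σ X) = 1) :
    ∃ s, σ X = X * s ∧ constantCoeff (R := ZMod p) s = 1 := by
  obtain ⟨s, hs⟩ := X_dvd_iff.mpr h1
  refine ⟨s, hs, ?_⟩
  have := h2; rw [hs] at this
  rwa [show (1 : ℕ) = 0 + 1 from rfl, coeff_succ_X_mul, coeff_zero_eq_constantCoeff] at this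

lemma cc_apply (σ : RingAut (PowerSeries (ZMod p)))
    (h1 : constantCoeff (R := ZMod p) (σ X) = 0) (h2 : coeff (R := ZMod p) 1 (σ X) = 1)
    (f : PowerSeries (ZMod p)) :
    constantCoeff (R := ZMod p) (σ f) = constantCoeff (R := ZMod p) f := by
  obtain ⟨s, hs, hs1⟩ := exists_s σ h1 h2
  obtain ⟨h', hh'⟩ := X_dvd_iff.mpr
    (show constantCoeff (R := ZMod p) (f - C (R := ZMod p) (constantCoeff (R := ZMod p) f)) = 0 by simp)
  have hfd : f = C (R := ZMod p) (constantCoeff (R := ZMod p) f) + X * h' := by rw [← hh']; ring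
  rw [hfd, map_add, map_mul, sigma_C, hs]
  simp [mul_assoc]

lemma L1 (σ : RingAut (PowerSeries (ZMod p)))
    (h1 : constantCoeff (R := ZMod p) (σ X) = 0) (h2 : coeff (R := ZMod p) 1 (σ X) = 1)
    (k : ℕ) (f : PowerSeries (ZMod p)) (hf : ∀ j < k, coeff (R := ZMod p) j f = 0) :
    ∀ j ≤ k, coeff (R := ZMod p) j (σ f) = coeff (R := ZMod p) j f := by
  obtain ⟨s, hs, hs1⟩ := exists_s σ h1 h2
  obtain ⟨g, hg⟩ := X_pow_dvd_iff.mpr hf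
  have hσf : σ f = X ^ k * (s ^ k * σ g) := by
    rw [hg, map_mul, map_pow, hs, mul_pow]; ring
  intro j hj
  rcases lt_or_eq_of_le hj with hlt | rfl
  · rw [hσf, coeff_X_pow_mul' , if_neg (by omega), hf j hlt]
  · rw [hσf, hg, coeff_X_pow_mul', if_pos le_rfl, coeff_X_pow_mul', if_pos le_rfl,
      Nat.sub_self]
    simp only [coeff_zero_eq_constantCoeff, map_mul, map_pow, hs1, one_pow, one_mul,
      cc_apply σ h1 h2]


lemma pow_sub_pow_dvd (w : PowerSeries (ZMod p)) (k : ℕ) (hk : 1 ≤ k)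
    (hw : X ^ k ∣ w) : ∀ i, 2 ≤ i → (X : PowerSeries (ZMod p)) ^ (k + 1) ∣ ((X + w) ^ i - X ^ i) := by
  have hXw : (X : PowerSeries (ZMod p)) ^ (k + 1) ∣ w * X := by
    obtain ⟨v, hv⟩ := hw
    exact ⟨v, by rw [hv]; ring⟩
  have hww : (X : PowerSeries (ZMod p)) ^ (k + 1) ∣ w * w := by
    obtain ⟨v, hv⟩ := hw
    refine ⟨X ^ (k - 1) * v * v, ?_⟩
    rw [hv, show (X : PowerSeries (ZMod p)) ^ (k+1) * (X ^ (k-1) * v * v)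
      = X ^ (k+1+(k-1)) * (v * v) by rw [pow_add]; ring,
      show k + 1 + (k - 1) = k + k by omega, pow_add]
    ring
  intro i hi
  induction i with
  | zero => omega
  | succ m ih =>
    rcases Nat.lt_or_ge m 2 with hm | hm
    · have hm2 : m = 1 := by omega
      subst hm2
      have : (X + w) ^ 2 - (X : PowerSeries (ZMod p)) ^ 2 = w * X + w * X + w * w := by ring
      rw [this]
      exact dvd_add (dvd_add hXw hXw) hww
    · have h1 : ((X + w) ^ (m + 1) - X ^ (m + 1) : PowerSeries (ZMod p))
          = (X + w) * ((X + w) ^ m - X ^ m) + w * X ^ m := by ring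
      rw [h1]
      refine dvd_add (Dvd.dvd.mul_left (ih hm) _) ?_
      obtain ⟨v, hv⟩ := hw
      refine ⟨v * X ^ (m - 1), ?_⟩
      rw [hv, show (X : PowerSeries (ZMod p)) ^ (k+1) * (v * X ^ (m-1))
        = X ^ (k+1+(m-1)) * v by rw [pow_add]; ring,
        show k + 1 + (m - 1) = k + m by omega, pow_add]
      ring

lemma L2 (σ : RingAut (PowerSeries (ZMod p)))
    (h1 : constantCoeff (R := ZMod p) (σ X) = 0) (h2 : coeff (R := ZMod p) 1 (σ X) = 1)
    (k : ℕ) (hk : 1 ≤ k) (hw : ∀ j < k, coeff (R := ZMod p) j (σ X - X) = 0)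
    (f : PowerSeries (ZMod p)) :
    coeff (R := ZMod p) k (σ f - f) = coeff (R := ZMod p) 1 f * coeff (R := ZMod p) k (σ X - X) := by
  set w : PowerSeries (ZMod p) := σ X - X with hwdef
  have hσX : σ X = X + w := by rw [hwdef]; ring
  have hXkw : (X : PowerSeries (ZMod p)) ^ k ∣ w := X_pow_dvd_iff.mpr hw
  -- truncation
  set T : PowerSeries (ZMod p) :=
    ∑ i ∈ Finset.range (k + 1), C (R := ZMod p) (coeff (R := ZMod p) i f) * X ^ i with hT
  have hcoT : ∀ j ≤ k, coeff (R := ZMod p) j T = coeff (R := ZMod p) j f := by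
    intro j hj
    rw [hT, map_sum]
    rw [Finset.sum_eq_single j]
    · simp
    · intro b _ hbj
      simp [coeff_X_pow, hbj, Ne.symm hbj]
    · intro hjm; exact absurd (Finset.mem_range.mpr (by omega)) hjm
  have hdvd : (X : PowerSeries (ZMod p)) ^ (k + 1) ∣ f - T := by
    rw [X_pow_dvd_iff]
    intro j hj
    rw [map_sub, hcoT j (by omega), sub_self]
  obtain ⟨r, hr⟩ := hdvd
  have hf : f = T + X ^ (k + 1) * r := by rw [← hr]; ring
  obtain ⟨s, hs, hs1⟩ := exists_s σ h1 h2
  have key : σ f - f = (σ T - T) + ((X * s) ^ (k + 1) * σ r - X ^ (k + 1) * r) := by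
    rw [hf, map_add, map_mul, map_pow, hs]; ring
  have hhigh : ∀ g : PowerSeries (ZMod p), X ^ (k+1) ∣ g → coeff (R := ZMod p) k g = 0 := by
    intro g hg
    exact X_pow_dvd_iff.mp hg k (by omega)
  have htail : coeff (R := ZMod p) k ((X * s) ^ (k + 1) * σ r - X ^ (k + 1) * r) = 0 := by
    apply hhigh
    refine dvd_sub ?_ ⟨r, rfl⟩
    exact ⟨s ^ (k+1) * σ r, by rw [mul_pow]; ring⟩
  have hσT : σ T = ∑ i ∈ Finset.range (k + 1),
      C (R := ZMod p) (coeff (R := ZMod p) i f) * (X + w) ^ i := by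
    rw [hT, map_sum]
    refine Finset.sum_congr rfl fun i _ => ?_
    rw [map_mul, map_pow, sigma_C, hσX]
  have hterm : ∀ i ∈ Finset.range (k + 1),
      coeff (R := ZMod p) k (C (R := ZMod p) (coeff (R := ZMod p) i f) * ((X + w) ^ i - X ^ i))
        = if i = 1 then coeff (R := ZMod p) 1 f * coeff (R := ZMod p) k w else 0 := by
    intro i _
    match i with
    | 0 => simp
    | 1 => simp [coeff_C_mul]
    | (m+2) =>
      rw [if_neg (by omega)]
      rw [coeff_C_mul, hhigh _ (pow_sub_pow_dvd w k hk hXkw (m+2) (by omega)), mul_zero]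
  have hmain : coeff (R := ZMod p) k (σ T - T) = coeff (R := ZMod p) 1 f * coeff (R := ZMod p) k w := by
    have : σ T - T = ∑ i ∈ Finset.range (k + 1),
        C (R := ZMod p) (coeff (R := ZMod p) i f) * ((X + w) ^ i - X ^ i) := by
      rw [hσT, hT, ← Finset.sum_sub_distrib]
      refine Finset.sum_congr rfl fun i _ => by ring
    rw [this, map_sum, Finset.sum_congr rfl hterm, Finset.sum_ite_eq'
      (Finset.range (k+1)) 1 (fun _ => coeff (R := ZMod p) 1 f * coeff (R := ZMod p) k w),
      if_pos (Finset.mem_range.mpr (by omega))]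
  rw [key, map_add, hmain, htail, add_zero]

lemma L3 (σ : RingAut (PowerSeries (ZMod p)))
    (h1 : constantCoeff (R := ZMod p) (σ X) = 0) (h2 : coeff (R := ZMod p) 1 (σ X) = 1)
    (hX : σ X = X) : σ = 1 := by
  have hfix : ∀ f, σ f = f := by
    intro f
    have hz : ∀ j, coeff (R := ZMod p) j (σ f - f) = 0 := by
      intro j
      match j with
      | 0 =>
        simp only [map_sub, coeff_zero_eq_constantCoeff_apply, cc_apply σ h1 h2, sub_self]
      | (m+1) =>
        rw [L2 σ h1 h2 (m+1) (by omega) (by simp [hX]) f, hX, sub_self, map_zero, mul_zero]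
    have h0 : σ f - f = 0 := PowerSeries.ext (by simpa using hz)
    exact sub_eq_zero.mp h0
  exact RingEquiv.ext hfix
end NottAux

/-- For an order `p` element `u` of the Nottingham group, `u` and `u^n` are conjugate
if and only if they are equal. -/
theorem order_p_conj_iff_eq (p : ℕ) [Fact p.Prime] (u : Nottingham p)
    (hu : orderOf u = p) (n : ℕ) : IsConj u (u ^ n) ↔ u = u ^ n := by
  constructor
  · intro hc
    set uR : RingAut (PowerSeries (ZMod p)) := (u : RingAut (PowerSeries (ZMod p))) with huR
    obtain ⟨hu0, hu1c⟩ := (u.2 : (constantCoeff (R := ZMod p) (uR X) = 0 ∧ coeff (R := ZMod p) 1 (uR X) = 1))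
    by_cases hfix : uR X = X
    · have h1 : uR = 1 := NottAux.L3 uR hu0 hu1c hfix
      have hu1 : u = 1 := Subtype.ext h1
      rw [hu1, one_pow]
    · set w0 := uR X - X with hw0
      have hw0ne : w0 ≠ 0 := sub_ne_zero.mpr hfix
      have hex : ∃ j, coeff (R := ZMod p) j w0 ≠ 0 := by
        by_contra h
        push_neg at h
        exact hw0ne (PowerSeries.ext (by simpa using h))
      have ha : coeff (R := ZMod p) (Nat.find hex) w0 ≠ 0 := Nat.find_spec hex
      set k := Nat.find hex with hk
      set a := coeff (R := ZMod p) k w0 with hadef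
      have hbelow : ∀ j < k, coeff (R := ZMod p) j w0 = 0 := fun j hj =>
        not_not.mp (Nat.find_min hex hj)
      have hk1 : 1 ≤ k := by
        rcases Nat.eq_zero_or_pos k with h0 | h
        · exfalso
          apply ha
          rw [hadef, h0, hw0, map_sub, coeff_zero_eq_constantCoeff_apply, huR, hu0]
          simp
        · exact h
      have hmempow : ∀ j : ℕ, uR ^ j ∈ Nottingham p := fun j => pow_mem u.2 j
      have hpow : ∀ j : ℕ, (∀ i < k, coeff (R := ZMod p) i ((uR ^ j) X - X) = 0) ∧
          coeff (R := ZMod p) k ((uR ^ j) X - X) = (j : ZMod p) * a := by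
        intro j
        induction j with
        | zero =>
          constructor
          · intro i _
            show coeff (R := ZMod p) i ((1 : RingAut (PowerSeries (ZMod p))) X - X) = 0
            show coeff (R := ZMod p) i (X - X) = 0
            simp
          · show coeff (R := ZMod p) k ((1 : RingAut (PowerSeries (ZMod p))) X - X)
              = ((0 : ℕ) : ZMod p) * a
            show coeff (R := ZMod p) k (X - X) = ((0 : ℕ) : ZMod p) * a
            simp
        | succ m ih =>
          obtain ⟨hm0, hm1c⟩ := (hmempow m : (constantCoeff (R := ZMod p) ((uR ^ m) X) = 0 ∧ coeff (R := ZMod p) 1 ((uR ^ m) X) = 1))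
          have hdecomp : (uR ^ (m+1)) X - X = (uR ^ m) w0 + ((uR ^ m) X - X) := by
            have h' : (uR ^ (m+1)) X = (uR ^ m) (uR X) := by rw [pow_succ]; rfl
            rw [h', hw0, map_sub]; ring
          constructor
          · intro i hi
            rw [hdecomp, map_add, NottAux.L1 (uR ^ m) hm0 hm1c k w0 hbelow i (le_of_lt hi),
              hbelow i hi, ih.1 i hi, add_zero]
          · rw [hdecomp, map_add, NottAux.L1 (uR ^ m) hm0 hm1c k w0 hbelow k le_rfl, ih.2,
              ← hadef]
            push_cast
            ring
      obtain ⟨c, hcconj⟩ := isConj_iff.mp hc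
      have hcu : (c * u : Nottingham p) = u ^ n * c := by
        rw [← hcconj]; group
      set cR : RingAut (PowerSeries (ZMod p)) := (c : RingAut (PowerSeries (ZMod p))) with hcR
      obtain ⟨hc0, hc1⟩ := (c.2 : (constantCoeff (R := ZMod p) (cR X) = 0 ∧ coeff (R := ZMod p) 1 (cR X) = 1))
      have hEq : cR (uR X) = (uR ^ n) (cR X) := by
        have h := congrArg
          (fun σ : Nottingham p => ((σ : RingAut (PowerSeries (ZMod p))) X)) hcu
        simp only [Subgroup.coe_mul, SubmonoidClass.coe_pow] at h
        exact h
      have hA : coeff (R := ZMod p) k (cR (uR X) - cR X) = a := by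
        rw [← map_sub, ← hw0]
        exact NottAux.L1 cR hc0 hc1 k w0 hbelow k le_rfl
      have hB : coeff (R := ZMod p) k ((uR ^ n) (cR X) - cR X) = (n : ZMod p) * a := by
        obtain ⟨hn0, hn1c⟩ := (hmempow n : (constantCoeff (R := ZMod p) ((uR ^ n) X) = 0 ∧ coeff (R := ZMod p) 1 ((uR ^ n) X) = 1))
        rw [NottAux.L2 (uR ^ n) hn0 hn1c k hk1 (hpow n).1 (cR X), hc1, (hpow n).2, one_mul]
      rw [hEq] at hA
      have hkey : (n : ZMod p) * a = a := hB.symm.trans hA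
      have hna : ((n : ZMod p) - 1) * a = 0 := by
        rw [sub_mul, one_mul, hkey, sub_self]
      have hn1 : (n : ZMod p) = 1 := by
        rcases mul_eq_zero.mp hna with h' | h'
        · exact sub_eq_zero.mp h'
        · exact absurd h' ha
      have hmod : n ≡ 1 [MOD p] := (ZMod.natCast_eq_natCast_iff n 1 p).mp (by simpa using hn1)
      have hpoweq : u ^ n = u ^ 1 := pow_eq_pow_iff_modEq.mpr (by rw [hu]; exact hmod)
      rw [hpoweq, pow_one]
  · intro h
    exact h ▸ IsConj.refl u
end

section
/- Let p be a prime, and let u(t) = t(1 + t^{l+j})^d (1 + t^m)^e be an element of the Nottingham group over F_p, where l, j, m, d, e are positive integers with l + j < m. Then, as elements of U_1 = 1 + tF_p[[t]], one has 1 + u(t)^{m−l−j} ≡ (1 + t^{m−l−j})·(1 + t^m)^{d(m−l−j)} modulo the subgroup 1 + t^{m+1}F_p[[t]]. -/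
open PowerSeries

theorem one_add_pow_aux {R : Type*} [CommRing R] (y : R) :
    ∀ N : ℕ, ∃ r : R, (1 + y) ^ N = 1 + (N : R) * y + y ^ 2 * r := by
  intro N
  induction N with
  | zero => exact ⟨0, by push_cast; ring⟩
  | succ n ih =>
    obtain ⟨r, hr⟩ := ih
    refine ⟨r + n + y * r, ?_⟩
    rw [pow_succ, hr]
    push_cast
    ring

/-- For `u(t) = t (1 + t^{l+j})^d (1 + t^m)^e` with `l + j < m`, one has
`1 + u(t)^{m-l-j} ≡ (1 + t^{m-l-j})(1 + t^m)^{d(m-l-j)}` mod `1 + t^{m+1} F_p[[t]]`. -/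
theorem uj_pow_congr (p : ℕ) [Fact p.Prime] (l j m d e : ℕ)
    (hl : 0 < l) (hj : 0 < j) (hd : 0 < d) (he : 0 < e) (hlt : l + j < m) :
    ∃ g : PowerSeries (ZMod p),
      1 + (X * (1 + X ^ (l + j)) ^ d * (1 + X ^ m) ^ e : PowerSeries (ZMod p)) ^ (m - l - j)
        = (1 + X ^ (m - l - j)) * (1 + X ^ m) ^ (d * (m - l - j))
          * (1 + X ^ (m + 1) * g) := by
  obtain ⟨a, rfl⟩ : ∃ a, l = a + 1 := ⟨l - 1, by omega⟩
  obtain ⟨b, rfl⟩ : ∃ b, j = b + 1 := ⟨j - 1, by omega⟩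
  obtain ⟨k, rfl⟩ : ∃ k, m = a + b + k + 3 := ⟨m - a - b - 3, by omega⟩
  have hK : a + b + k + 3 - (a + 1) - (b + 1) = k + 1 := by omega
  rw [hK]
  obtain ⟨r₁, h₁⟩ := one_add_pow_aux (X ^ (a + 1 + (b + 1)) : PowerSeries (ZMod p)) (d * (k + 1))
  obtain ⟨r₂, h₂⟩ := one_add_pow_aux (X ^ (a + b + k + 3) : PowerSeries (ZMod p)) (e * (k + 1))
  obtain ⟨r₃, h₃⟩ := one_add_pow_aux (X ^ (a + b + k + 3) : PowerSeries (ZMod p)) (d * (k + 1))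
  set A : PowerSeries (ZMod p) :=
    (1 + X ^ (k + 1)) * (1 + X ^ (a + b + k + 3)) ^ (d * (k + 1)) with hAdef
  set c₁ : PowerSeries (ZMod p) := ((d * (k + 1) : ℕ) : PowerSeries (ZMod p)) with hc₁
  set c₂ : PowerSeries (ZMod p) := ((e * (k + 1) : ℕ) : PowerSeries (ZMod p)) with hc₂
  set h : PowerSeries (ZMod p) :=
    X ^ (a + b + 1) * r₁
      + (1 + c₁ * X ^ (a + 1 + (b + 1)) + (X ^ (a + 1 + (b + 1))) ^ 2 * r₁)
          * (c₂ * X ^ k + X ^ (a + b + 2 * k + 3) * r₂)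
      - X ^ (a + b + k + 2) * r₃ - c₁ * X ^ k - X ^ (a + b + 2 * k + 3) * r₃ with hh
  have hA0 : constantCoeff A ≠ 0 := by
    have : constantCoeff A = 1 := by
      simp [hAdef, map_mul, map_pow, map_add, map_one, constantCoeff_X]
    rw [this]
    exact one_ne_zero
  have hinv : A * A⁻¹ = 1 := PowerSeries.mul_inv_cancel A hA0
  have key :
      1 + (X * (1 + X ^ (a + 1 + (b + 1))) ^ d
            * (1 + X ^ (a + b + k + 3)) ^ e : PowerSeries (ZMod p)) ^ (k + 1)
        = A + X ^ (a + b + k + 4) * h := by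
    rw [mul_pow, mul_pow, ← pow_mul, ← pow_mul, h₁, h₂, hAdef, h₃, hh, hc₁, hc₂]
    ring
  refine ⟨A⁻¹ * h, ?_⟩
  rw [key]
  linear_combination (-(X ^ (a + b + k + 4) * h) : PowerSeries (ZMod p)) * hinv
end
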